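/- For the greedy routing Markov chain on the directed n-cycle with independent shortcuts distributed by ℓ, the hitting probabilities to destination 0 satisfy the backwards equation h(x) = Σ_{ξ=x+1}^{n-1} h(ξ)ℓ(ξ−x) + h(x+1)·Σ_{ξ=x+2}^{n-1} ℓ(ξ) + 1/(n−1), for 1 ≤ x ≤ n−2, where h(n−1) = 1/(n−1). -/

import Mathlib

open Finset
open scoped Classical

/-- One greedy routing step toward destination `0` on the directed `n`-cycle:
from `v ≠ 0` move to whichever of the shortcut endpoint `E v` and the base-edge
successor `v - 1` is closer to `0`. -/
def gstep (n : ℕ) [NeZero n] (E : ZMod n → ZMod n) (v : ZMod n) : ZMod n :=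
  if v = 0 then 0 else if (E v).val < (v - 1).val then E v else v - 1

/-- The greedy walk from `y` toward `0` passes through `x`. -/
def hits (n : ℕ) [NeZero n] (E : ZMod n → ZMod n) (y x : ZMod n) : Prop :=
  ∃ t ≤ n, (gstep n E)^[t] y = x

/-- Product weight: each vertex independently has one shortcut whose (directed)
length is distributed according to `ℓ`. -/
noncomputable def wProd (n : ℕ) [NeZero n] (ℓ : ℕ → ℝ) (E : ZMod n → ZMod n) : ℝ :=
  ∏ x : ZMod n, ℓ ((x - E x).val)

/-- Hitting probability of the vertex at distance `x` for a greedy query to `0` from a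
start uniform on the `n - 1` non-destination vertices. -/
noncomputable def hitProb (n : ℕ) [NeZero n] (ℓ : ℕ → ℝ) (x : ZMod n) : ℝ :=
  ∑ E : ZMod n → ZMod n, wProd n ℓ E *
    ((∑ y ∈ (univ : Finset (ZMod n)).erase 0, if hits n E y x then (1 : ℝ) else 0)
      / ((n : ℝ) - 1))

section helpers
variable {n : ℕ} [NeZero n]

def stepTo (n : ℕ) [NeZero n] (ξ a : ZMod n) : ZMod n :=
  if ξ = 0 then 0 else if a.val < (ξ - 1).val then a else ξ - 1

lemma gstep_eq (E : ZMod n → ZMod n) (ξ : ZMod n) : gstep n E ξ = stepTo n ξ (E ξ) := rfl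

lemma stepTo_zero (a : ZMod n) : stepTo n 0 a = 0 := by simp [stepTo]

lemma sub_one_val {v : ZMod n} (hv : v ≠ 0) : (v - 1).val = v.val - 1 := by
  have h1 : 1 ≤ v.val := Nat.one_le_iff_ne_zero.mpr (by simpa [ZMod.val_eq_zero] using hv)
  have h2 : v.val < n := ZMod.val_lt v
  have : (v - 1) = ((v.val - 1 : ℕ) : ZMod n) := by
    have : v = ((v.val : ℕ) : ZMod n) := by simp [ZMod.natCast_val, ZMod.cast_id]
    rw [Nat.cast_sub h1, ← this, Nat.cast_one]
  rw [this, ZMod.val_cast_of_lt (by omega)]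

lemma stepTo_val_lt {ξ : ZMod n} (hξ : ξ ≠ 0) (a : ZMod n) : (stepTo n ξ a).val < ξ.val := by
  have h1 : 1 ≤ ξ.val := Nat.one_le_iff_ne_zero.mpr (by simpa [ZMod.val_eq_zero] using hξ)
  have h2 := sub_one_val hξ
  unfold stepTo
  rw [if_neg hξ]
  split <;> omega

lemma gstep_zero (E : ZMod n → ZMod n) : gstep n E 0 = 0 := by simp [gstep]

lemma gstep_val_lt (E : ZMod n → ZMod n) {v : ZMod n} (hv : v ≠ 0) :
    (gstep n E v).val < v.val := by
  rw [gstep_eq]; exact stepTo_val_lt hv _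

/-- Either absorbed at 0 or the value has decreased by at least `t`. -/
lemma gw_key (E : ZMod n → ZMod n) (y : ZMod n) :
    ∀ t, (gstep n E)^[t] y = 0 ∨ ((gstep n E)^[t] y).val + t ≤ y.val := by
  intro t
  induction t with
  | zero => right; simp
  | succ t ih =>
    by_cases hz : (gstep n E)^[t] y = 0
    · left; rw [Function.iterate_succ_apply', hz, gstep_zero]
    · rcases ih with h | h
      · exact absurd h hz
      · right
        rw [Function.iterate_succ_apply']
        have := gstep_val_lt E hz
        omega

lemma hits_of_iter {E : ZMod n → ZMod n} {y x : ZMod n} {t : ℕ}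
    (h : (gstep n E)^[t] y = x) (hx : x ≠ 0) : hits n E y x := by
  rcases gw_key E y t with h0 | h0
  · exact absurd (h ▸ h0) hx
  · refine ⟨t, ?_, h⟩
    rw [h] at h0
    have := ZMod.val_lt y
    omega

lemma gstep_congr_pt {E E' : ZMod n → ZMod n} {v : ZMod n} (h : E v = E' v) :
    gstep n E v = gstep n E' v := by
  unfold gstep; rw [h]

lemma hits_congr {E E' : ZMod n → ZMod n} {ξ : ZMod n}
    (hEE : ∀ v, v ≠ ξ → E v = E' v) {y : ZMod n} (h : hits n E y ξ) : hits n E' y ξ := by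
  classical
  have hex : ∃ t, t ≤ n ∧ (gstep n E)^[t] y = ξ := by
    obtain ⟨t, htn, ht⟩ := h; exact ⟨t, htn, ht⟩
  have h₀n := (Nat.find_spec hex).1
  have h₀ := (Nat.find_spec hex).2
  have hagree : ∀ s, s ≤ Nat.find hex → (gstep n E')^[s] y = (gstep n E)^[s] y := by
    intro s hs
    induction s with
    | zero => rfl
    | succ s ih =>
      have hne : (gstep n E)^[s] y ≠ ξ := by
        intro hc
        exact Nat.find_min hex (show s < Nat.find hex by omega) ⟨by omega, hc⟩
      rw [Function.iterate_succ_apply', Function.iterate_succ_apply', ih (by omega)]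
      exact (gstep_congr_pt (hEE _ hne)).symm
  exact ⟨Nat.find hex, h₀n, (hagree _ le_rfl).trans h₀⟩

lemma hits_self (E : ZMod n → ZMod n) (y : ZMod n) : hits n E y y :=
  ⟨0, Nat.zero_le n, rfl⟩

/-- Decomposition: hitting `x ≠ 0` happens either at the start or via a predecessor. -/
lemma hits_step_iff (E : ZMod n → ZMod n) {x : ZMod n} (hx : x ≠ 0) (y : ZMod n) :
    hits n E y x ↔ y = x ∨ ∃ ξ, hits n E y ξ ∧ ξ ≠ x ∧ gstep n E ξ = x := by
  classical
  constructor
  · intro h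
    by_cases hyx : y = x
    · exact Or.inl hyx
    · right
      have hex : ∃ t, t ≤ n ∧ (gstep n E)^[t] y = x := by
        obtain ⟨t, htn, ht⟩ := h; exact ⟨t, htn, ht⟩
      have h₀n := (Nat.find_spec hex).1
      have h₀ := (Nat.find_spec hex).2
      have ht0 : Nat.find hex ≠ 0 := by
        intro hc; rw [hc] at h₀; exact hyx h₀
      refine ⟨(gstep n E)^[Nat.find hex - 1] y, ⟨Nat.find hex - 1, by omega, rfl⟩, ?_, ?_⟩
      · intro hc
        exact Nat.find_min hex (show Nat.find hex - 1 < Nat.find hex by omega) ⟨by omega, hc⟩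
      · have hs' : (gstep n E)^[(Nat.find hex - 1) + 1] y = x := by
          rw [show (Nat.find hex - 1) + 1 = Nat.find hex by omega]; exact h₀
        rw [Function.iterate_succ_apply'] at hs'
        exact hs'
  · rintro (rfl | ⟨ξ, ⟨s, hsn, hs⟩, hne, hstep⟩)
    · exact hits_self E _
    · refine hits_of_iter (t := s + 1) ?_ hx
      rw [Function.iterate_succ_apply', hs, hstep]

/-- A vertex ≠ x on the trajectory whose gstep is x cannot occur when starting at x. -/
lemma no_pred_of_start (E : ZMod n → ZMod n) {x ξ : ZMod n} (hx : x ≠ 0)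
    (h : hits n E x ξ) (hne : ξ ≠ x) (hstep : gstep n E ξ = x) : False := by
  have hξ0 : ξ ≠ 0 := by
    intro hc; rw [hc, gstep_zero] at hstep; exact hx hstep.symm
  have hlt : x.val < ξ.val := hstep ▸ gstep_val_lt E hξ0
  obtain ⟨s, hsn, hs⟩ := h
  rcases gw_key E x s with h0 | h0
  · exact hξ0 (hs ▸ h0)
  · rw [hs] at h0
    have hs0 : s = 0 := by omega
    rw [hs0] at hs
    exact hne (show x = ξ by simpa using hs).symm

/-- Uniqueness of the predecessor. -/
lemma pred_unique (E : ZMod n → ZMod n) {x y ξ₁ ξ₂ : ZMod n} (hx : x ≠ 0)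
    (h1 : hits n E y ξ₁) (h2 : hits n E y ξ₂)
    (hs1 : gstep n E ξ₁ = x) (hs2 : gstep n E ξ₂ = x)
    (hn1 : ξ₁ ≠ x) (hn2 : ξ₂ ≠ x) : ξ₁ = ξ₂ := by
  have key : ∀ (ζ₁ ζ₂ : ZMod n) (s t : ℕ), s ≤ t →
      (gstep n E)^[s] y = ζ₁ → (gstep n E)^[t] y = ζ₂ →
      gstep n E ζ₁ = x → gstep n E ζ₂ = x → ζ₂ ≠ x → ζ₁ = ζ₂ := by
    intro ζ₁ ζ₂ s t hst hss htt hst1 hst2 hne2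
    have hζ₂0 : ζ₂ ≠ 0 := by
      intro hc; rw [hc, gstep_zero] at hst2; exact hx hst2.symm
    have hlt : x.val < ζ₂.val := hst2 ▸ gstep_val_lt E hζ₂0
    rcases Nat.eq_or_lt_of_le hst with heq | hlt2
    · rw [← hss, ← htt, heq]
    · exfalso
      have hit : (gstep n E)^[t - s - 1] x = ζ₂ := by
        have : (gstep n E)^[(t - s - 1) + (s + 1)] y = ζ₂ := by
          rw [show (t - s - 1) + (s + 1) = t by omega]; exact htt
        rw [Function.iterate_add_apply, Function.iterate_succ_apply',
          hss, hst1] at this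
        exact this
      rcases gw_key E x (t - s - 1) with h0 | h0
      · exact hζ₂0 (hit ▸ h0)
      · rw [hit] at h0; omega
  obtain ⟨s, hsn, hs⟩ := h1
  obtain ⟨t, htn, ht⟩ := h2
  rcases le_total s t with h | h
  · exact key ξ₁ ξ₂ s t h hs ht hs1 hs2 hn2
  · exact (key ξ₂ ξ₁ t s h ht hs hs2 hs1 hn1).symm

/-- Indicator decomposition for hitting `x ≠ 0`. -/
lemma indicator_decomp (E : ZMod n → ZMod n) {x : ZMod n} (hx : x ≠ 0) (y : ZMod n) :
    (if hits n E y x then (1 : ℝ) else 0)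
      = (if y = x then (1 : ℝ) else 0)
        + ∑ ξ : ZMod n, (if ξ ≠ x ∧ gstep n E ξ = x then (1 : ℝ) else 0)
            * (if hits n E y ξ then (1 : ℝ) else 0) := by
  classical
  by_cases hyx : y = x
  · subst hyx
    rw [if_pos (hits_self E y), if_pos rfl]
    have hz : ∀ ξ : ZMod n, (if ξ ≠ y ∧ gstep n E ξ = y then (1 : ℝ) else 0)
        * (if hits n E y ξ then (1 : ℝ) else 0) = 0 := by
      intro ξ
      by_cases h1 : ξ ≠ y ∧ gstep n E ξ = y
      · by_cases h2 : hits n E y ξ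
        · exact absurd (no_pred_of_start E hx h2 h1.1 h1.2) not_false
        · simp [h2]
      · simp [h1]
    rw [Finset.sum_congr rfl fun ξ _ => hz ξ]
    simp
  · rw [if_neg hyx]
    by_cases hh : hits n E y x
    · rw [if_pos hh]
      rcases (hits_step_iff E hx y).mp hh with h | ⟨ξ₀, hξ₀, hne₀, hstep₀⟩
      · exact absurd h hyx
      · rw [zero_add, Finset.sum_eq_single_of_mem ξ₀ (mem_univ _)]
        · rw [if_pos ⟨hne₀, hstep₀⟩, if_pos hξ₀]; norm_num
        · intro b _ hb
          by_cases h1 : b ≠ x ∧ gstep n E b = x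
          · by_cases h2 : hits n E y b
            · exact absurd (pred_unique E hx h2 hξ₀ h1.2 hstep₀ h1.1 hne₀) hb
            · simp [h2]
          · simp [h1]
    · rw [if_neg hh, zero_add]
      symm
      apply Finset.sum_eq_zero
      intro ξ _
      by_cases h1 : ξ ≠ x ∧ gstep n E ξ = x
      · by_cases h2 : hits n E y ξ
        · exact absurd ((hits_step_iff E hx y).mpr (Or.inr ⟨ξ, h2, h1⟩)) hh
        · simp [h2]
      · simp [h1]

/-- Reindex a sum over `ZMod n` by natural representatives. -/
lemma sum_zmod (f : ZMod n → ℝ) : ∑ a : ZMod n, f a = ∑ m ∈ range n, f (m : ZMod n) := by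
  refine Finset.sum_nbij' (fun a => a.val) (fun m => (m : ZMod n)) ?_ ?_ ?_ ?_ ?_
  · intro a _; exact Finset.mem_range.mpr (ZMod.val_lt a)
  · intro m _; exact mem_univ _
  · intro a _; simp [ZMod.natCast_val, ZMod.cast_id]
  · intro m hm; exact ZMod.val_cast_of_lt (Finset.mem_range.mp hm)
  · intro a _; simp [ZMod.natCast_val, ZMod.cast_id]

/-- Reindex a sum over `ZMod n` by the length `L` of the jump from `ξ`. -/
lemma sum_shift (ξ : ZMod n) (f : ZMod n → ℝ) :
    ∑ a : ZMod n, f a = ∑ L ∈ range n, f (ξ - (L : ZMod n)) := by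
  calc ∑ a : ZMod n, f a = ∑ a : ZMod n, f (ξ - a) :=
        (Equiv.sum_comp (Equiv.subLeft ξ) f).symm
    _ = ∑ L ∈ range n, f (ξ - (L : ZMod n)) := sum_zmod (fun a => f (ξ - a))

lemma zmod_sub_cancel (ξ a : ZMod n) : ξ - (ξ - a) = a := by ring

lemma range_eq_insert (hn : 2 ≤ n) : range n = insert 0 (Icc 1 (n - 1)) := by
  ext m; simp [Finset.mem_range, Finset.mem_Icc]; omega

lemma sum_ell_one (hn : 2 ≤ n) (ℓ : ℕ → ℝ)
    (hsupp : ∀ x, x ∉ Icc 1 (n - 1) → ℓ x = 0)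
    (hsum : ∑ x ∈ Icc 1 (n - 1), ℓ x = 1) (ξ : ZMod n) :
    ∑ a : ZMod n, ℓ ((ξ - a).val) = 1 := by
  rw [sum_shift ξ (fun a => ℓ ((ξ - a).val))]
  have : ∀ L ∈ range n, ℓ ((ξ - (ξ - (L : ZMod n))).val) = ℓ L := by
    intro L hL
    rw [zmod_sub_cancel, ZMod.val_cast_of_lt (Finset.mem_range.mp hL)]
  rw [Finset.sum_congr rfl this, range_eq_insert hn, Finset.sum_insert (by simp),
    hsupp 0 (by simp), hsum, zero_add]

lemma sum_wProd_one (hn : 2 ≤ n) (ℓ : ℕ → ℝ)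
    (hsupp : ∀ x, x ∉ Icc 1 (n - 1) → ℓ x = 0)
    (hsum : ∑ x ∈ Icc 1 (n - 1), ℓ x = 1) :
    ∑ E : ZMod n → ZMod n, wProd n ℓ E = 1 := by
  unfold wProd
  rw [← Fintype.prod_sum (fun (x : ZMod n) (a : ZMod n) => ℓ ((x - a).val))]
  rw [Finset.prod_congr rfl fun x _ => sum_ell_one hn ℓ hsupp hsum x]
  simp

/-- Independence: the factor at `ξ` decouples from a function depending on `E` off `ξ`. -/
lemma indep (ℓ : ℕ → ℝ) (ξ : ZMod n) (A : ZMod n → ℝ) (G : (ZMod n → ZMod n) → ℝ)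
    (hG : ∀ E₁ E₂ : ZMod n → ZMod n, (∀ v, v ≠ ξ → E₁ v = E₂ v) → G E₁ = G E₂)
    (hone : ∑ a : ZMod n, ℓ ((ξ - a).val) = 1) :
    ∑ E : ZMod n → ZMod n, wProd n ℓ E * A (E ξ) * G E
      = (∑ a : ZMod n, ℓ ((ξ - a).val) * A a) * ∑ E : ZMod n → ZMod n, wProd n ℓ E * G E := by
  classical
  set e := Equiv.piSplitAt ξ (fun _ : ZMod n => ZMod n) with he
  have hsymm_at : ∀ (a : ZMod n) (E' : {j : ZMod n // j ≠ ξ} → ZMod n),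
      e.symm (a, E') ξ = a := by
    intro a E'; simp [he, Equiv.piSplitAt]
  have hsymm_ne : ∀ (a : ZMod n) (E' : {j : ZMod n // j ≠ ξ} → ZMod n) (v : ZMod n)
      (hv : v ≠ ξ), e.symm (a, E') v = E' ⟨v, hv⟩ := by
    intro a E' v hv; simp [he, Equiv.piSplitAt, hv]
  have hw : ∀ (a : ZMod n) (E' : {j : ZMod n // j ≠ ξ} → ZMod n),
      wProd n ℓ (e.symm (a, E'))
        = ℓ ((ξ - a).val) * ∏ v : {j : ZMod n // j ≠ ξ}, ℓ ((v.1 - E' v).val) := by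
    intro a E'
    unfold wProd
    rw [← Finset.mul_prod_erase univ _ (mem_univ ξ), hsymm_at]
    congr 1
    rw [Finset.prod_subtype (univ.erase ξ) (p := fun v => v ≠ ξ) (by simp)
      (fun v => ℓ ((v - e.symm (a, E') v).val))]
    exact Finset.prod_congr rfl fun v _ => by rw [hsymm_ne a E' v.1 v.2]
  have hGc : ∀ (a : ZMod n) (E' : {j : ZMod n // j ≠ ξ} → ZMod n),
      G (e.symm (a, E')) = G (e.symm (0, E')) := by
    intro a E'
    exact hG _ _ fun v hv => by rw [hsymm_ne a E' v hv, hsymm_ne 0 E' v hv]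
  have expand : ∀ B : ZMod n → ℝ,
      (∑ E : ZMod n → ZMod n, wProd n ℓ E * B (E ξ) * G E)
        = (∑ a : ZMod n, ℓ ((ξ - a).val) * B a)
          * ∑ E' : {j : ZMod n // j ≠ ξ} → ZMod n,
              (∏ v : {j : ZMod n // j ≠ ξ}, ℓ ((v.1 - E' v).val)) * G (e.symm (0, E')) := by
    intro B
    rw [← Equiv.sum_comp e.symm (fun E => wProd n ℓ E * B (E ξ) * G E),
      Fintype.sum_prod_type, Finset.sum_mul]
    refine Finset.sum_congr rfl fun a _ => ?_
    rw [Finset.mul_sum]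
    refine Finset.sum_congr rfl fun E' _ => ?_
    rw [hw a E', hsymm_at a E', hGc a E']
    ring
  have h1 := expand A
  have h2 := expand (fun _ => 1)
  simp only [mul_one] at h2
  rw [hone, one_mul] at h2
  rw [h1, h2]

end helpers

section master
variable {n : ℕ} [NeZero n]

/-- Sum over starts of the hit indicator, decomposed by predecessor. -/
lemma N_decomp (E : ZMod n → ZMod n) {X : ZMod n} (hX : X ≠ 0) :
    (∑ y ∈ (univ : Finset (ZMod n)).erase 0, if hits n E y X then (1 : ℝ) else 0)
      = 1 + ∑ ξ : ZMod n, (if ξ ≠ X ∧ stepTo n ξ (E ξ) = X then (1 : ℝ) else 0)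
          * (∑ y ∈ (univ : Finset (ZMod n)).erase 0, if hits n E y ξ then (1 : ℝ) else 0) := by
  classical
  have h1 : ∀ y ∈ (univ : Finset (ZMod n)).erase 0,
      (if hits n E y X then (1 : ℝ) else 0)
        = (if y = X then (1 : ℝ) else 0)
          + ∑ ξ : ZMod n, (if ξ ≠ X ∧ stepTo n ξ (E ξ) = X then (1 : ℝ) else 0)
              * (if hits n E y ξ then (1 : ℝ) else 0) := by
    intro y _
    have := indicator_decomp E hX y
    simp only [gstep_eq] at this
    convert this
    exact if_congr Iff.rfl rfl rfl
  rw [Finset.sum_congr rfl h1, Finset.sum_add_distrib]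
  congr 1
  · rw [Finset.sum_ite_eq' ((univ : Finset (ZMod n)).erase 0) X (fun _ => (1 : ℝ))]
    rw [if_pos (by simp [hX])]
  · rw [Finset.sum_comm]
    exact Finset.sum_congr rfl fun ξ _ => (Finset.mul_sum _ _ _).symm

/-- Master backwards recursion for the hitting probabilities, at level of `ZMod n`. -/
lemma master (hn : 2 ≤ n) (ℓ : ℕ → ℝ)
    (hsupp : ∀ x, x ∉ Icc 1 (n - 1) → ℓ x = 0)
    (hsum : ∑ x ∈ Icc 1 (n - 1), ℓ x = 1)
    (X : ZMod n) (hX : X ≠ 0) :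
    hitProb n ℓ X = 1 / ((n : ℝ) - 1)
      + ∑ ξ : ZMod n,
          (∑ a : ZMod n, ℓ ((ξ - a).val) * (if ξ ≠ X ∧ stepTo n ξ a = X then (1 : ℝ) else 0))
            * hitProb n ℓ ξ := by
  classical
  have step1 : hitProb n ℓ X
      = ∑ E : ZMod n → ZMod n, (wProd n ℓ E * (1 / ((n : ℝ) - 1))
          + ∑ ξ : ZMod n, wProd n ℓ E
              * (if ξ ≠ X ∧ stepTo n ξ (E ξ) = X then (1 : ℝ) else 0)
              * ((∑ y ∈ (univ : Finset (ZMod n)).erase 0,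
                    if hits n E y ξ then (1 : ℝ) else 0) / ((n : ℝ) - 1))) := by
    unfold hitProb
    refine Finset.sum_congr rfl fun E _ => ?_
    rw [N_decomp E hX, add_div, mul_add]
    congr 1
    rw [Finset.sum_div, Finset.mul_sum]
    refine Finset.sum_congr rfl fun ξ _ => ?_
    ring
  rw [step1, Finset.sum_add_distrib]
  congr 1
  · rw [← Finset.sum_mul, sum_wProd_one hn ℓ hsupp hsum, one_mul]
  · rw [Finset.sum_comm]
    refine Finset.sum_congr rfl fun ξ _ => ?_
    have hone := sum_ell_one hn ℓ hsupp hsum ξ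
    have hind := indep (n := n) ℓ ξ
      (fun a => if ξ ≠ X ∧ stepTo n ξ a = X then (1 : ℝ) else 0)
      (fun E => (∑ y ∈ (univ : Finset (ZMod n)).erase 0,
          if hits n E y ξ then (1 : ℝ) else 0) / ((n : ℝ) - 1))
      (fun E₁ E₂ hEE => by
        have hNN : (∑ y ∈ (univ : Finset (ZMod n)).erase 0,
              if hits n E₁ y ξ then (1 : ℝ) else 0)
            = ∑ y ∈ (univ : Finset (ZMod n)).erase 0,
              if hits n E₂ y ξ then (1 : ℝ) else 0 := by
          refine Finset.sum_congr rfl fun y _ => ?_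
          congr 1
          exact propext ⟨hits_congr hEE, hits_congr fun v hv => (hEE v hv).symm⟩
        simp only [hNN])
      hone
    rw [hind]
    rfl

end master

section coeff
variable {n : ℕ} [NeZero n]

lemma val_inj' {a b : ZMod n} : a = b ↔ a.val = b.val :=
  ⟨fun h => h ▸ rfl, fun h => ZMod.val_injective n h⟩

lemma cast_sub_val {m L : ℕ} (hm : m < n) (hL : L < n) :
    ((m : ZMod n) - (L : ZMod n)).val = if L ≤ m then m - L else m + n - L := by
  have h1 : (m : ZMod n) - (L : ZMod n) = ((m + n - L : ℕ) : ZMod n) := by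
    rw [show m + n - L = m + (n - L) by omega, Nat.cast_add, Nat.cast_sub hL.le]
    rw [ZMod.natCast_self]
    ring
  rw [h1, ZMod.val_natCast]
  split
  · rw [show m + n - L = (m - L) + n by omega, Nat.add_mod_right,
      Nat.mod_eq_of_lt (by omega)]
  · rw [Nat.mod_eq_of_lt (by omega)]

lemma coeff_comp (hn : 2 ≤ n) (ℓ : ℕ → ℝ)
    (hsupp : ∀ x, x ∉ Icc 1 (n - 1) → ℓ x = 0)
    (x : ℕ) (hx1 : 1 ≤ x) (hx2 : x ≤ n - 2) (m : ℕ) (hm : m < n) :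
    (∑ a : ZMod n, ℓ (((m : ZMod n) - a).val)
        * (if (m : ZMod n) ≠ (x : ZMod n) ∧ stepTo n (m : ZMod n) a = (x : ZMod n)
            then (1 : ℝ) else 0))
      = if m = x + 1 then ℓ 1 + ∑ L ∈ Ioc (x + 1) (n - 1), ℓ L
        else if x + 2 ≤ m then ℓ (m - x) else 0 := by
  classical
  have hn3 : 3 ≤ n := by omega
  have h0 : ℓ 0 = 0 := hsupp 0 (by simp)
  have hXval : ((x : ZMod n)).val = x := ZMod.val_cast_of_lt (by omega)
  have hMval : ((m : ZMod n)).val = m := ZMod.val_cast_of_lt hm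
  by_cases h1 : m = x + 1
  · subst h1
    rw [if_pos rfl]
    have hM0 : ((x + 1 : ℕ) : ZMod n) ≠ 0 := by
      rw [Ne, val_inj', hMval, ZMod.val_zero]; omega
    have hMX : ((x + 1 : ℕ) : ZMod n) ≠ ((x : ℕ) : ZMod n) := by
      rw [Ne, val_inj', hMval, hXval]; omega
    have hM1 : ((x + 1 : ℕ) : ZMod n) - 1 = ((x : ℕ) : ZMod n) := by
      push_cast; ring
    have hstep_iff : ∀ a : ZMod n,
        stepTo n ((x + 1 : ℕ) : ZMod n) a = ((x : ℕ) : ZMod n) ↔ x ≤ a.val := by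
      intro a
      simp only [stepTo, if_neg hM0, hM1, hXval]
      by_cases hlt : a.val < x
      · rw [if_pos hlt]
        constructor
        · intro hc; rw [hc, hXval] at hlt; omega
        · intro hge; omega
      · rw [if_neg hlt]; simp; omega
    rw [sum_shift ((x + 1 : ℕ) : ZMod n)]
    have hterm : ∀ L ∈ range n,
        ℓ ((((x + 1 : ℕ) : ZMod n) - (((x + 1 : ℕ) : ZMod n) - (L : ZMod n))).val)
          * (if ((x + 1 : ℕ) : ZMod n) ≠ ((x : ℕ) : ZMod n) ∧
              stepTo n ((x + 1 : ℕ) : ZMod n) (((x + 1 : ℕ) : ZMod n) - (L : ZMod n))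
                = ((x : ℕ) : ZMod n) then (1 : ℝ) else 0)
        = (if L = 1 then ℓ 1 else 0) + (if L ∈ Ioc (x + 1) (n - 1) then ℓ L else 0) := by
      intro L hL
      have hLn := Finset.mem_range.mp hL
      rw [zmod_sub_cancel, ZMod.val_cast_of_lt hLn]
      have hcond : (((x + 1 : ℕ) : ZMod n) ≠ ((x : ℕ) : ZMod n) ∧
          stepTo n ((x + 1 : ℕ) : ZMod n) (((x + 1 : ℕ) : ZMod n) - (L : ZMod n))
            = ((x : ℕ) : ZMod n))
          ↔ x ≤ ((((x + 1 : ℕ) : ZMod n) - (L : ZMod n)).val) := by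
        rw [hstep_iff]
        exact and_iff_right hMX
      rw [if_congr hcond rfl rfl, cast_sub_val (show x + 1 < n by omega) hLn]
      by_cases hL1 : L = 1
      · subst hL1
        rw [if_pos (show (1:ℕ) ≤ x + 1 by omega)]
        rw [show x + 1 - 1 = x from by omega, if_pos (le_refl x), if_pos rfl,
          if_neg (show ¬ (1 ∈ Ioc (x+1) (n-1)) from by simp only [Finset.mem_Ioc]; omega)]
        ring
      · by_cases hL0 : L = 0
        · subst hL0
          rw [if_pos (show (0:ℕ) ≤ x + 1 by omega),
            if_pos (show x ≤ x + 1 - 0 by omega),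
            if_neg hL1,
            if_neg (show ¬ (0 ∈ Ioc (x+1) (n-1)) from by simp only [Finset.mem_Ioc]; omega)]
          rw [h0]; ring
        · by_cases hLx : L ≤ x + 1
          · -- 2 ≤ L ≤ x + 1
            rw [if_pos hLx, if_neg (show ¬ x ≤ x + 1 - L from by omega),
              if_neg hL1,
              if_neg (show ¬ (L ∈ Ioc (x+1) (n-1)) from by simp only [Finset.mem_Ioc]; omega)]
            ring
          · -- x + 2 ≤ L ≤ n - 1
            rw [if_neg hLx, if_pos (show x ≤ x + 1 + n - L from by omega),
              if_neg hL1,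
              if_pos (show L ∈ Ioc (x+1) (n-1) from by simp only [Finset.mem_Ioc]; omega)]
            ring
    rw [Finset.sum_congr rfl hterm, Finset.sum_add_distrib,
      Finset.sum_ite_eq' (range n) 1 (fun _ => ℓ 1),
      if_pos (Finset.mem_range.mpr (by omega)),
      Finset.sum_ite_mem,
      Finset.inter_eq_right.mpr
        (fun L hL => Finset.mem_range.mpr (by
          have := Finset.mem_Ioc.mp hL; omega))]
  · rw [if_neg h1]
    by_cases h2 : x + 2 ≤ m
    · rw [if_pos h2]
      have hM0 : ((m : ℕ) : ZMod n) ≠ 0 := by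
        rw [Ne, val_inj', hMval, ZMod.val_zero]; omega
      have hMX : ((m : ℕ) : ZMod n) ≠ ((x : ℕ) : ZMod n) := by
        rw [Ne, val_inj', hMval, hXval]; omega
      have hM1 : (((m : ℕ) : ZMod n) - 1).val = m - 1 := by
        rw [sub_one_val hM0, hMval]
      have hstep_iff : ∀ a : ZMod n,
          stepTo n ((m : ℕ) : ZMod n) a = ((x : ℕ) : ZMod n) ↔ a = ((x : ℕ) : ZMod n) := by
        intro a
        simp only [stepTo, if_neg hM0]
        by_cases hlt : a.val < (((m : ℕ) : ZMod n) - 1).val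
        · rw [if_pos hlt]
        · rw [if_neg hlt]
          rw [hM1] at hlt
          constructor
          · intro hc
            rw [val_inj', hM1, hXval] at hc; omega
          · intro hc
            rw [hc, hXval] at hlt; omega
      rw [sum_shift ((m : ℕ) : ZMod n)]
      have hterm : ∀ L ∈ range n,
          ℓ ((((m : ℕ) : ZMod n) - (((m : ℕ) : ZMod n) - (L : ZMod n))).val)
            * (if ((m : ℕ) : ZMod n) ≠ ((x : ℕ) : ZMod n) ∧
                stepTo n ((m : ℕ) : ZMod n) (((m : ℕ) : ZMod n) - (L : ZMod n))
                  = ((x : ℕ) : ZMod n) then (1 : ℝ) else 0)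
          = (if L = m - x then ℓ L else 0) := by
        intro L hL
        have hLn := Finset.mem_range.mp hL
        rw [zmod_sub_cancel, ZMod.val_cast_of_lt hLn]
        have hcond : (((m : ℕ) : ZMod n) ≠ ((x : ℕ) : ZMod n) ∧
            stepTo n ((m : ℕ) : ZMod n) (((m : ℕ) : ZMod n) - (L : ZMod n))
              = ((x : ℕ) : ZMod n))
            ↔ ((((m : ℕ) : ZMod n) - (L : ZMod n)).val = x) := by
          rw [hstep_iff]
          rw [and_iff_right hMX, val_inj', hXval]
        rw [if_congr hcond rfl rfl, cast_sub_val hm hLn]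
        by_cases hLmx : L = m - x
        · subst hLmx
          rw [if_pos (show m - x ≤ m by omega),
            if_pos (show m - (m - x) = x by omega), if_pos rfl]
          ring
        · rw [if_neg hLmx]
          by_cases hLm : L ≤ m
          · rw [if_pos hLm, if_neg (show ¬ m - L = x by omega)]
            ring
          · rw [if_neg hLm, if_neg (show ¬ m + n - L = x by omega)]
            ring
      rw [Finset.sum_congr rfl hterm,
        Finset.sum_ite_eq' (range n) (m - x) (fun L => ℓ L),
        if_pos (Finset.mem_range.mpr (by omega))]
    · -- m ≤ x : all terms vanish
      rw [if_neg h2]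
      apply Finset.sum_eq_zero
      intro a _
      rw [if_neg, mul_zero]
      rintro ⟨hMX, hstep⟩
      by_cases hm0 : ((m : ℕ) : ZMod n) = 0
      · rw [hm0, stepTo_zero] at hstep
        have hcontra : ((x : ℕ) : ZMod n).val = 0 := by rw [← hstep, ZMod.val_zero]
        rw [hXval] at hcontra
        omega
      · have hlt := stepTo_val_lt hm0 a
        rw [hstep, hXval, hMval] at hlt
        have hx_eq : m = x := by omega
        exact hMX (by rw [hx_eq])

end coeff

/-- The hitting probabilities of the greedy routing chain on the directed `n`-cycle with
independent `ℓ`-distributed shortcuts satisfy the backwards equations: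
`h (n-1) = 1/(n-1)` and, for `1 ≤ x ≤ n-2`,
`h x = ∑_{ξ=x+1}^{n-1} h ξ ℓ(ξ - x) + h (x+1) ∑_{ξ=x+2}^{n-1} ℓ ξ + 1/(n-1)`. -/
theorem hitProb_backwards_eq (n : ℕ) [NeZero n] (hn : 2 ≤ n) (ℓ : ℕ → ℝ)
    (hl0 : ∀ x, 0 ≤ ℓ x) (hsupp : ∀ x, x ∉ Icc 1 (n - 1) → ℓ x = 0)
    (hsum : ∑ x ∈ Icc 1 (n - 1), ℓ x = 1) :
    hitProb n ℓ ((n - 1 : ℕ) : ZMod n) = 1 / ((n : ℝ) - 1) ∧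
    ∀ x : ℕ, 1 ≤ x → x ≤ n - 2 →
      hitProb n ℓ ((x : ℕ) : ZMod n)
        = (∑ ξ ∈ Ioc x (n - 1), hitProb n ℓ ((ξ : ℕ) : ZMod n) * ℓ (ξ - x))
          + hitProb n ℓ ((x + 1 : ℕ) : ZMod n) * (∑ ξ ∈ Ioc (x + 1) (n - 1), ℓ ξ)
          + 1 / ((n : ℝ) - 1) := by
  classical
  constructor
  · -- boundary value at distance n - 1
    have hXval : (((n - 1 : ℕ)) : ZMod n).val = n - 1 := ZMod.val_cast_of_lt (by omega)
    have hX : ((n - 1 : ℕ) : ZMod n) ≠ 0 := by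
      rw [Ne, val_inj', hXval, ZMod.val_zero]; omega
    rw [master hn ℓ hsupp hsum _ hX, Finset.sum_eq_zero, add_zero]
    intro ξ _
    rw [Finset.sum_eq_zero, zero_mul]
    intro a _
    rw [if_neg, mul_zero]
    rintro ⟨hne, hstep⟩
    by_cases hξ0 : ξ = 0
    · rw [hξ0, stepTo_zero] at hstep; exact hX hstep.symm
    · have h1 := stepTo_val_lt hξ0 a
      rw [hstep, hXval] at h1
      have h2 := ZMod.val_lt ξ
      omega
  · intro x hx1 hx2
    have hn3 : 3 ≤ n := by omega
    have hXval : ((x : ℕ) : ZMod n).val = x := ZMod.val_cast_of_lt (by omega)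
    have hX : ((x : ℕ) : ZMod n) ≠ 0 := by
      rw [Ne, val_inj', hXval, ZMod.val_zero]; omega
    rw [master hn ℓ hsupp hsum _ hX]
    rw [sum_zmod (fun ξ => (∑ a : ZMod n, ℓ ((ξ - a).val)
      * (if ξ ≠ ((x : ℕ) : ZMod n) ∧ stepTo n ξ a = ((x : ℕ) : ZMod n)
          then (1 : ℝ) else 0)) * hitProb n ℓ ξ)]
    have hterm : ∀ m ∈ range n,
        (∑ a : ZMod n, ℓ (((m : ZMod n) - a).val)
            * (if (m : ZMod n) ≠ ((x : ℕ) : ZMod n) ∧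
                stepTo n (m : ZMod n) a = ((x : ℕ) : ZMod n) then (1 : ℝ) else 0))
          * hitProb n ℓ (m : ZMod n)
        = (if m = x + 1 then ℓ 1 + ∑ L ∈ Ioc (x + 1) (n - 1), ℓ L
            else if x + 2 ≤ m then ℓ (m - x) else 0) * hitProb n ℓ (m : ZMod n) := by
      intro m hm
      rw [coeff_comp hn ℓ hsupp x hx1 hx2 m (Finset.mem_range.mp hm)]
    rw [Finset.sum_congr rfl hterm]
    rw [← Finset.sum_subset
      (show Ioc x (n - 1) ⊆ range n from fun m hm => by
        have := Finset.mem_Ioc.mp hm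
        exact Finset.mem_range.mpr (by omega))
      (fun m hm hnot => by
        have h1 := Finset.mem_range.mp hm
        have h2 : m ≤ x := by
          by_contra hc
          exact hnot (Finset.mem_Ioc.mpr ⟨by omega, by omega⟩)
        rw [if_neg (by omega), if_neg (by omega), zero_mul])]
    have hsplit : Ioc x (n - 1) = insert (x + 1) (Ioc (x + 1) (n - 1)) := by
      ext m
      simp only [Finset.mem_Ioc, Finset.mem_insert]
      omega
    rw [hsplit, Finset.sum_insert (by simp only [Finset.mem_Ioc]; omega),
      Finset.sum_insert (by simp only [Finset.mem_Ioc]; omega)]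
    rw [if_pos rfl]
    have hrest : ∀ m ∈ Ioc (x + 1) (n - 1),
        (if m = x + 1 then ℓ 1 + ∑ L ∈ Ioc (x + 1) (n - 1), ℓ L
            else if x + 2 ≤ m then ℓ (m - x) else 0) * hitProb n ℓ (m : ZMod n)
        = hitProb n ℓ (m : ZMod n) * ℓ (m - x) := by
      intro m hm
      have h1 := Finset.mem_Ioc.mp hm
      rw [if_neg (by omega), if_pos (by omega), mul_comm]
    rw [Finset.sum_congr rfl hrest]
    rw [show x + 1 - x = 1 by omega]
    push_cast
    ring
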